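/- Let c ≥ 1, let G be a group, and let π : F → G and π̄ : F̄ → G be surjective group homomorphisms from free groups F and F̄, with kernels R = ker π and R̄ = ker π̄. Then there is a group isomorphism (R ∩ γ_{c+1}(F))/⟨T_{c+1}(F) ∩ R⟩ ≅ (R̄ ∩ γ_{c+1}(F̄))/⟨T_{c+1}(F̄) ∩ R̄⟩; that is, the c-nilpotent B̃₀-invariant of G is independent of the chosen free presentation of G. -/

import Mathlib

open Subgroup
open scoped commutatorElement

/-- `Tset G c` is the set `T_{c+1}(G)` of left-normed commutators of weight `c+1` in `G`:
`Tset G 0 = G` (weight-one "commutators", i.e. all elements), and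
`Tset G (n+1) = {⁅a, g⁆ | a ∈ Tset G n, g ∈ G}`. -/
def Tset (G : Type*) [Group G] : ℕ → Set G
  | 0 => Set.univ
  | n + 1 => {x | ∃ a ∈ Tset G n, ∃ g : G, x = ⁅a, g⁆}

theorem Tset_conj {G : Type*} [Group G] (n : ℕ) {x : G} (hx : x ∈ Tset G n) (g : G) :
    g * x * g⁻¹ ∈ Tset G n := by
  induction n generalizing x with
  | zero => trivial
  | succ n ih =>
      obtain ⟨a, ha, b, rfl⟩ := hx
      exact ⟨g * a * g⁻¹, ih ha, g * b * g⁻¹, conjugate_commutatorElement a b g⟩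

/-- `Tcl c S = ⟨T_{c+1}(G) ∩ S⟩`, the subgroup generated by the left-normed commutators of
weight `c+1` lying in `S`. -/
def Tcl {G : Type*} [Group G] (c : ℕ) (S : Subgroup G) : Subgroup G :=
  Subgroup.closure (Tset G c ∩ (S : Set G))

instance Tcl_normal {G : Type*} [Group G] (c : ℕ) (S : Subgroup G) [hS : S.Normal] :
    (Tcl c S).Normal := by
  constructor
  intro n hn g
  induction hn using Subgroup.closure_induction with
  | mem x hx =>
      exact Subgroup.subset_closure ⟨Tset_conj c hx.1 g, hS.conj_mem x hx.2 g⟩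
  | one => simpa using (Tcl c S).one_mem
  | mul x y _ _ hx hy =>
      have h : g * (x * y) * g⁻¹ = (g * x * g⁻¹) * (g * y * g⁻¹) := by group
      rw [h]; exact mul_mem hx hy
  | inv x _ hx =>
      have h : g * x⁻¹ * g⁻¹ = (g * x * g⁻¹)⁻¹ := by group
      rw [h]; exact inv_mem hx

theorem Tset_subset_lcs {G : Type*} [Group G] (n : ℕ) :
    Tset G n ⊆ (Subgroup.lowerCentralSeries (⊤ : Subgroup G) n : Set G) := by
  induction n with
  | zero => intro x _; simp [Subgroup.lowerCentralSeries_zero]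
  | succ n ih =>
      rintro x ⟨a, ha, b, rfl⟩
      rw [Subgroup.lowerCentralSeries_succ]
      exact Subgroup.commutator_mem_commutator (ih ha) (Subgroup.mem_top b)

theorem Tcl_le {G : Type*} [Group G] (c : ℕ) (S : Subgroup G) : Tcl c S ≤ S :=
  (Subgroup.closure_le S).2 Set.inter_subset_right

theorem Tcl_le_lcs {G : Type*} [Group G] (c : ℕ) (S : Subgroup G) :
    Tcl c S ≤ Subgroup.lowerCentralSeries (⊤ : Subgroup G) c :=
  (Subgroup.closure_le _).2 fun _ hx => Tset_subset_lcs c hx.1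

theorem Tcl_mono {G : Type*} [Group G] (c : ℕ) {R K : Subgroup G} (h : R ≤ K) :
    Tcl c R ≤ Tcl c K :=
  Subgroup.closure_mono (Set.inter_subset_inter_right _ h)

theorem subgroupOf_le_comap_inclusion {F : Type*} [Group F] {A B H₁ H₂ : Subgroup F}
    (hH : H₁ ≤ H₂) (hAB : A ≤ B) :
    A.subgroupOf H₁ ≤ (B.subgroupOf H₂).comap (Subgroup.inclusion hH) := by
  intro x hx
  rw [Subgroup.mem_comap, Subgroup.mem_subgroupOf, Subgroup.coe_inclusion]
  exact hAB (Subgroup.mem_subgroupOf.mp hx)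


/-! ### Auxiliary development -/

section AuxDev

variable {G : Type*} [Group G]

theorem closure_normal_of_conj {S : Set G} (h : ∀ x ∈ S, ∀ g : G, g * x * g⁻¹ ∈ S) :
    (Subgroup.closure S).Normal := by
  constructor
  intro n hn g
  induction hn using Subgroup.closure_induction with
  | mem x hx => exact Subgroup.subset_closure (h x hx g)
  | one => simpa using (Subgroup.closure S).one_mem
  | mul x y _ _ hx hy =>
      have hrw : g * (x * y) * g⁻¹ = (g * x * g⁻¹) * (g * y * g⁻¹) := by group
      rw [hrw]; exact mul_mem hx hy
  | inv x _ hx =>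
      have hrw : g * x⁻¹ * g⁻¹ = (g * x * g⁻¹)⁻¹ := by group
      rw [hrw]; exact inv_mem hx

theorem closure_Tset (n : ℕ) : Subgroup.closure (Tset G n) = Subgroup.lowerCentralSeries (⊤ : Subgroup G) n := by
  refine le_antisymm ((Subgroup.closure_le _).2 (Tset_subset_lcs n)) ?_
  induction n with
  | zero =>
      intro x _
      exact Subgroup.subset_closure (by trivial)
  | succ n ih =>
      rw [Subgroup.lowerCentralSeries_succ]
      refine (Subgroup.closure_le _).2 ?_
      rintro z ⟨a, ha, b, -, rfl⟩
      show ⁅a, b⁆ ∈ Subgroup.closure (Tset G (n + 1))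
      haveI : (Subgroup.closure (Tset G (n + 1))).Normal :=
        closure_normal_of_conj (fun x hx g => Tset_conj _ hx g)
      have ha' : a ∈ Subgroup.closure (Tset G n) := ih ha
      clear ha
      induction ha' using Subgroup.closure_induction with
      | mem t ht => exact Subgroup.subset_closure ⟨t, ht, b, rfl⟩
      | one =>
          have h1 : ⁅(1 : G), b⁆ = 1 := by group
          rw [h1]; exact one_mem _
      | mul x y _ _ hx hy =>
          have hrw : ⁅x * y, b⁆ = (x * ⁅y, b⁆ * x⁻¹) * ⁅x, b⁆ := by group
          rw [hrw]
          exact mul_mem (Subgroup.Normal.conj_mem ‹_› _ hy x) hx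
      | inv x _ hx =>
          have hrw : ⁅x⁻¹, b⁆ = x⁻¹ * ⁅x, b⁆⁻¹ * (x⁻¹)⁻¹ := by group
          rw [hrw]
          exact Subgroup.Normal.conj_mem ‹_› _ (inv_mem hx) x⁻¹

/-- Left-normed commutator chains of weight `n+1` with at least one entry in `R`. -/
def Rset (R : Subgroup G) : ℕ → Set G
  | 0 => (R : Set G)
  | n + 1 =>
      {x | (∃ a ∈ Rset R n, ∃ g : G, x = ⁅a, g⁆) ∨ ∃ a ∈ Tset G n, ∃ r ∈ R, x = ⁅a, r⁆}

theorem Rset_subset_Tset (R : Subgroup G) (n : ℕ) : Rset R n ⊆ Tset G n := by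
  induction n with
  | zero => intro x _; trivial
  | succ n ih =>
      rintro x (⟨a, ha, g, rfl⟩ | ⟨a, ha, r, _, rfl⟩)
      · exact ⟨a, ih ha, g, rfl⟩
      · exact ⟨a, ha, r, rfl⟩

theorem Rset_subset (R : Subgroup G) [hR : R.Normal] (n : ℕ) : Rset R n ⊆ (R : Set G) := by
  induction n with
  | zero => exact fun x hx => hx
  | succ n ih =>
      rintro x (⟨a, ha, g, rfl⟩ | ⟨a, _, r, hr, rfl⟩)
      · have ha' : a ∈ R := ih ha
        have hrw : ⁅a, g⁆ = a * (g * a⁻¹ * g⁻¹) := by group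
        rw [hrw]
        exact mul_mem ha' (hR.conj_mem _ (inv_mem ha') g)
      · have hrw : ⁅a, r⁆ = (a * r * a⁻¹) * r⁻¹ := by group
        rw [hrw]
        exact mul_mem (hR.conj_mem _ hr a) (inv_mem hr)

theorem Rset_conj (R : Subgroup G) [hR : R.Normal] (n : ℕ) {x : G} (hx : x ∈ Rset R n)
    (g : G) : g * x * g⁻¹ ∈ Rset R n := by
  induction n generalizing x with
  | zero => exact hR.conj_mem _ hx g
  | succ n ih =>
      rcases hx with ⟨a, ha, b, rfl⟩ | ⟨a, ha, r, hr, rfl⟩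
      · exact Or.inl ⟨g * a * g⁻¹, ih ha, g * b * g⁻¹, conjugate_commutatorElement a b g⟩
      · exact Or.inr ⟨g * a * g⁻¹, Tset_conj n ha g, g * r * g⁻¹, hR.conj_mem _ hr g,
          conjugate_commutatorElement a r g⟩

/-- The subgroup generated by `Rset R n`. -/
def Msub (R : Subgroup G) (n : ℕ) : Subgroup G := Subgroup.closure (Rset R n)

theorem Msub_normal (R : Subgroup G) [R.Normal] (n : ℕ) : (Msub R n).Normal :=
  closure_normal_of_conj (fun x hx g => Rset_conj R n hx g)

theorem Msub_comm {R : Subgroup G} [R.Normal] {n : ℕ} {x : G} (hx : x ∈ Msub R n)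
    (g : G) : ⁅x, g⁆ ∈ Msub R (n + 1) := by
  haveI := Msub_normal R (n + 1)
  induction hx using Subgroup.closure_induction with
  | mem t ht => exact Subgroup.subset_closure (Or.inl ⟨t, ht, g, rfl⟩)
  | one =>
      have h1 : ⁅(1 : G), g⁆ = 1 := by group
      rw [h1]; exact one_mem _
  | mul x y _ _ hx hy =>
      have hrw : ⁅x * y, g⁆ = (x * ⁅y, g⁆ * x⁻¹) * ⁅x, g⁆ := by group
      rw [hrw]
      exact mul_mem (Subgroup.Normal.conj_mem ‹_› _ hy x) hx
  | inv x _ hx =>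
      have hrw : ⁅x⁻¹, g⁆ = x⁻¹ * ⁅x, g⁆⁻¹ * (x⁻¹)⁻¹ := by group
      rw [hrw]
      exact Subgroup.Normal.conj_mem ‹_› _ (inv_mem hx) x⁻¹

theorem Msub_le_Tcl (R : Subgroup G) [R.Normal] (c : ℕ) : Msub R c ≤ Tcl c R :=
  (Subgroup.closure_le _).2 fun x hx =>
    Subgroup.subset_closure ⟨Rset_subset_Tset R c hx, Rset_subset R c hx⟩

/-- Pairs of left-normed commutator chains whose entries agree modulo `R`. -/
def TTrel (R : Subgroup G) : ℕ → Set (G × G)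
  | 0 => {p | p.1 * p.2⁻¹ ∈ R}
  | n + 1 =>
      {p | ∃ u v, (u, v) ∈ TTrel R n ∧
        ∃ g h : G, g * h⁻¹ ∈ R ∧ p.1 = ⁅u, g⁆ ∧ p.2 = ⁅v, h⁆}

theorem TTrel_snd {R : Subgroup G} : ∀ {n : ℕ} {p : G × G}, p ∈ TTrel R n → p.2 ∈ Tset G n
  | 0, _, _ => by trivial
  | n + 1, p, ⟨u, v, huv, g, h, _, _, h2⟩ => by
      rw [h2]; exact ⟨v, TTrel_snd huv, h, rfl⟩

theorem TTrel_key {R : Subgroup G} [hR : R.Normal] :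
    ∀ (n : ℕ) (p : G × G), p ∈ TTrel R n → p.1 * p.2⁻¹ ∈ Msub R n
  | 0, p, hp => Subgroup.subset_closure hp
  | n + 1, p, ⟨u, v, huv, g, h, hr, h1, h2⟩ => by
      haveI := Msub_normal R (n + 1)
      have hm : v⁻¹ * u ∈ Msub R n := by
        have h0 : u * v⁻¹ ∈ Msub R n := TTrel_key n (u, v) huv
        have := (Msub_normal R n).conj_mem _ h0 v⁻¹
        simpa [mul_assoc] using this
      have hr' : h⁻¹ * g ∈ R := by
        have := hR.conj_mem _ hr h⁻¹
        simpa [mul_assoc] using this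
      have hA : ⁅v⁻¹ * u, g⁆ ∈ Msub R (n + 1) := Msub_comm hm g
      have hB : ⁅v, h⁻¹ * g⁆ ∈ Msub R (n + 1) :=
        Subgroup.subset_closure (Or.inr ⟨v, TTrel_snd huv, h⁻¹ * g, hr', rfl⟩)
      have key : p.1 * p.2⁻¹ =
          (v * ⁅v⁻¹ * u, g⁆ * v⁻¹) *
            (⁅v, h⁆ * (h * ⁅v, h⁻¹ * g⁆ * h⁻¹) * ⁅v, h⁆⁻¹) := by
        rw [h1, h2]; group
      rw [key]
      exact mul_mem (Subgroup.Normal.conj_mem ‹_› _ hA v)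
        (Subgroup.Normal.conj_mem ‹_› _
          (Subgroup.Normal.conj_mem ‹_› _ hB h) ⁅v, h⁆)

variable {H : Type*} [Group H]

theorem Tset_map (f : G →* H) {n : ℕ} {x : G} (hx : x ∈ Tset G n) : f x ∈ Tset H n := by
  induction n generalizing x with
  | zero => trivial
  | succ n ih =>
      obtain ⟨a, ha, g, rfl⟩ := hx
      exact ⟨f a, ih ha, f g, (map_commutatorElement f a g)⟩

theorem lcs_mem_map (f : G →* H) {n : ℕ} {x : G} (hx : x ∈ Subgroup.lowerCentralSeries (⊤ : Subgroup G) n) :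
    f x ∈ Subgroup.lowerCentralSeries (⊤ : Subgroup H) n :=
  lowerCentralSeries.map f n (Subgroup.mem_map.mpr ⟨x, hx, rfl⟩)

theorem Tcl_mem_map (f : G →* H) (c : ℕ) {R : Subgroup G} {R' : Subgroup H}
    (hR : ∀ y ∈ R, f y ∈ R') {x : G} (hx : x ∈ Tcl c R) : f x ∈ Tcl c R' := by
  induction hx using Subgroup.closure_induction with
  | mem t ht => exact Subgroup.subset_closure ⟨Tset_map f ht.1, hR t ht.2⟩
  | one => simpa using (Tcl c R').one_mem
  | mul x y _ _ hx hy => rw [map_mul]; exact mul_mem hx hy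
  | inv x _ hx => rw [map_inv]; exact inv_mem hx

/-- If `θ` fixes everything modulo `R`, then it fixes `Tset`-elements modulo `TTrel`. -/
theorem TT_of_theta {R : Subgroup G} (θ : G →* G) (hθ : ∀ z, θ z * z⁻¹ ∈ R) :
    ∀ (n : ℕ) (t : G), t ∈ Tset G n → (θ t, t) ∈ TTrel R n
  | 0, t, _ => hθ t
  | n + 1, _, ⟨a, ha, g, rfl⟩ =>
      ⟨θ a, a, TT_of_theta θ hθ n a ha, θ g, g, hθ g, map_commutatorElement θ a g, rfl⟩

theorem theta_congr {R : Subgroup G} [R.Normal] (c : ℕ) (θ : G →* G)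
    (hθ : ∀ z, θ z * z⁻¹ ∈ R) {x : G} (hx : x ∈ Subgroup.lowerCentralSeries (⊤ : Subgroup G) c) :
    θ x * x⁻¹ ∈ Tcl c R := by
  rw [← closure_Tset] at hx
  haveI : (Tcl c R).Normal := Tcl_normal c R
  induction hx using Subgroup.closure_induction with
  | mem t ht =>
      exact Msub_le_Tcl R c (TTrel_key c (θ t, t) (TT_of_theta θ hθ c t ht))
  | one => simpa using (Tcl c R).one_mem
  | mul x y _ _ hx hy =>
      have hrw : θ (x * y) * (x * y)⁻¹ = (θ x * x⁻¹) * (x * (θ y * y⁻¹) * x⁻¹) := by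
        rw [map_mul]; group
      rw [hrw]
      exact mul_mem hx (Subgroup.Normal.conj_mem ‹_› _ hy x)
  | inv x _ hx =>
      have hrw : θ x⁻¹ * (x⁻¹)⁻¹ = x⁻¹ * (θ x * x⁻¹)⁻¹ * (x⁻¹)⁻¹ := by
        rw [map_inv]; group
      rw [hrw]
      exact Subgroup.Normal.conj_mem ‹_› _ (inv_mem hx) x⁻¹

/-- The homomorphism between `B̃₀`-type quotients induced by `f : G →* H` with `f R ≤ R'`. -/
def presHom (c : ℕ) (f : G →* H) (R : Subgroup G) (R' : Subgroup H)
    [R.Normal] [R'.Normal] (hR : ∀ y ∈ R, f y ∈ R') :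
    (↥(R ⊓ Subgroup.lowerCentralSeries (⊤ : Subgroup G) c) ⧸ (Tcl c R).subgroupOf (R ⊓ Subgroup.lowerCentralSeries (⊤ : Subgroup G) c)) →*
      (↥(R' ⊓ Subgroup.lowerCentralSeries (⊤ : Subgroup H) c) ⧸
        (Tcl c R').subgroupOf (R' ⊓ Subgroup.lowerCentralSeries (⊤ : Subgroup H) c)) :=
  QuotientGroup.lift _
    ((QuotientGroup.mk' _).comp
      ((f.comp (R ⊓ Subgroup.lowerCentralSeries (⊤ : Subgroup G) c).subtype).codRestrict
        (R' ⊓ Subgroup.lowerCentralSeries (⊤ : Subgroup H) c)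
        (fun x => Subgroup.mem_inf.2
          ⟨hR _ (Subgroup.mem_inf.1 x.2).1, lcs_mem_map f (Subgroup.mem_inf.1 x.2).2⟩)))
    (by
      intro x hx
      rw [MonoidHom.mem_ker, MonoidHom.comp_apply, QuotientGroup.mk'_apply,
        QuotientGroup.eq_one_iff]
      exact Subgroup.mem_subgroupOf.mpr
        (Tcl_mem_map f c hR (Subgroup.mem_subgroupOf.mp hx)))

theorem presHom_mk (c : ℕ) (f : G →* H) (R : Subgroup G) (R' : Subgroup H)
    [R.Normal] [R'.Normal] (hR : ∀ y ∈ R, f y ∈ R')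
    (x : ↥(R ⊓ Subgroup.lowerCentralSeries (⊤ : Subgroup G) c)) :
    presHom c f R R' hR (QuotientGroup.mk x) =
      QuotientGroup.mk ⟨f ↑x, Subgroup.mem_inf.2
        ⟨hR _ (Subgroup.mem_inf.1 x.2).1, lcs_mem_map f (Subgroup.mem_inf.1 x.2).2⟩⟩ :=
  rfl

theorem presHom_comp {K : Type*} [Group K] (c : ℕ) (f : G →* H) (g : H →* K)
    (R : Subgroup G) (R' : Subgroup H) (R'' : Subgroup K)
    [R.Normal] [R'.Normal] [R''.Normal]
    (hf : ∀ y ∈ R, f y ∈ R') (hg : ∀ y ∈ R', g y ∈ R'')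
    (hgf : ∀ y ∈ R, (g.comp f) y ∈ R'')
    (q : ↥(R ⊓ Subgroup.lowerCentralSeries (⊤ : Subgroup G) c) ⧸ (Tcl c R).subgroupOf (R ⊓ Subgroup.lowerCentralSeries (⊤ : Subgroup G) c)) :
    presHom c g R' R'' hg (presHom c f R R' hf q) = presHom c (g.comp f) R R'' hgf q := by
  induction q using QuotientGroup.induction_on with
  | H x => rfl

theorem presHom_id (c : ℕ) (θ : G →* G) (R : Subgroup G) [R.Normal]
    (hθ : ∀ z, θ z * z⁻¹ ∈ R) (hR : ∀ y ∈ R, θ y ∈ R)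
    (q : ↥(R ⊓ Subgroup.lowerCentralSeries (⊤ : Subgroup G) c) ⧸ (Tcl c R).subgroupOf (R ⊓ Subgroup.lowerCentralSeries (⊤ : Subgroup G) c)) :
    presHom c θ R R hR q = q := by
  induction q using QuotientGroup.induction_on with
  | H x =>
      rw [presHom_mk]
      rw [QuotientGroup.eq]
      refine Subgroup.mem_subgroupOf.mpr ?_
      have hx : θ ↑x * (↑x)⁻¹ ∈ Tcl c R := theta_congr c θ hθ (Subgroup.mem_inf.1 x.2).2
      haveI : (Tcl c R).Normal := Tcl_normal c R
      have := Subgroup.Normal.conj_mem ‹(Tcl c R).Normal› _ (inv_mem hx) (↑x : G)⁻¹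
      simpa [mul_assoc] using this

end AuxDev

/-- for `c ≥ 1`, the `c`-nilpotent `B̃₀`-invariant
`(R ∩ γ_{c+1}(F))/⟨T_{c+1}(F) ∩ R⟩` is independent of the chosen free presentation
`π : F ↠ G`, `R = ker π`, of `G`.  Here `γ_{c+1}(F) = lowerCentralSeries F c` and
`⟨T_{c+1}(F) ∩ R⟩ = Tcl c R`. -/
theorem stmt6 (c : ℕ) (hc : 1 ≤ c) {G : Type*} [Group G] {α β : Type*}
    (π : FreeGroup α →* G) (hπ : Function.Surjective π)
    (πb : FreeGroup β →* G) (hπb : Function.Surjective πb) :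
    Nonempty
      ((↥(π.ker ⊓ Subgroup.lowerCentralSeries (⊤ : Subgroup (FreeGroup α)) c) ⧸
          (Tcl c π.ker).subgroupOf (π.ker ⊓ Subgroup.lowerCentralSeries (⊤ : Subgroup (FreeGroup α)) c)) ≃*
        (↥(πb.ker ⊓ Subgroup.lowerCentralSeries (⊤ : Subgroup (FreeGroup β)) c) ⧸
          (Tcl c πb.ker).subgroupOf (πb.ker ⊓ Subgroup.lowerCentralSeries (⊤ : Subgroup (FreeGroup β)) c))) := by
  obtain ⟨φ, hφ⟩ : ∃ φ : FreeGroup β →* FreeGroup α, ∀ x, π (φ x) = πb x := by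
    refine ⟨FreeGroup.lift fun b => (hπ (πb (FreeGroup.of b))).choose, fun x => ?_⟩
    have h : π.comp (FreeGroup.lift fun b => (hπ (πb (FreeGroup.of b))).choose) = πb :=
      FreeGroup.ext_hom _ _ fun b => by
        simp only [MonoidHom.comp_apply, FreeGroup.lift_apply_of]
        exact (hπ (πb (FreeGroup.of b))).choose_spec
    exact DFunLike.congr_fun h x
  obtain ⟨ψ, hψ⟩ : ∃ ψ : FreeGroup α →* FreeGroup β, ∀ x, πb (ψ x) = π x := by
    refine ⟨FreeGroup.lift fun a => (hπb (π (FreeGroup.of a))).choose, fun x => ?_⟩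
    have h : πb.comp (FreeGroup.lift fun a => (hπb (π (FreeGroup.of a))).choose) = π :=
      FreeGroup.ext_hom _ _ fun a => by
        simp only [MonoidHom.comp_apply, FreeGroup.lift_apply_of]
        exact (hπb (π (FreeGroup.of a))).choose_spec
    exact DFunLike.congr_fun h x
  have hφk : ∀ y ∈ πb.ker, φ y ∈ π.ker := fun y hy => by
    rw [MonoidHom.mem_ker, hφ]; exact hy
  have hψk : ∀ y ∈ π.ker, ψ y ∈ πb.ker := fun y hy => by
    rw [MonoidHom.mem_ker, hψ]; exact hy
  have hθ1 : ∀ z, (φ.comp ψ) z * z⁻¹ ∈ π.ker := fun z => by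
    rw [MonoidHom.mem_ker, map_mul, MonoidHom.comp_apply, hφ, hψ, map_inv, mul_inv_cancel]
  have hθ2 : ∀ z, (ψ.comp φ) z * z⁻¹ ∈ πb.ker := fun z => by
    rw [MonoidHom.mem_ker, map_mul, MonoidHom.comp_apply, hψ, hφ, map_inv, mul_inv_cancel]
  have hθ1k : ∀ y ∈ π.ker, (φ.comp ψ) y ∈ π.ker := fun y hy => hφk _ (hψk _ hy)
  have hθ2k : ∀ y ∈ πb.ker, (ψ.comp φ) y ∈ πb.ker := fun y hy => hψk _ (hφk _ hy)
  refine ⟨{ toFun := presHom c ψ π.ker πb.ker hψk,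
            invFun := presHom c φ πb.ker π.ker hφk,
            left_inv := fun q => ?_, right_inv := fun q => ?_,
            map_mul' := map_mul _ }⟩
  · exact (presHom_comp c ψ φ π.ker πb.ker π.ker hψk hφk hθ1k q).trans
      (presHom_id c (φ.comp ψ) π.ker hθ1 hθ1k q)
  · exact (presHom_comp c φ ψ πb.ker π.ker πb.ker hφk hψk hθ2k q).trans
      (presHom_id c (ψ.comp φ) πb.ker hθ2 hθ2k q)
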